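/- Let X be an ℝ^d-valued random variable, θ > 0, and suppose X satisfies the distributional fixed-point equation X =_d U^(1/θ)(X + Z), where U ~ U(0,1), Z ~ ν_1, and U, X, Z are independent. Then X =_d Σ_{i=1}^∞ Z_i (U_1 U_2 ⋯ U_i)^(1/θ), where Z_1, Z_2, … are i.i.d. with law ν_1 and U_1, U_2, … are i.i.d. U(0,1), independent of the Z_i's, provided the series converges almost surely. -/

import Mathlib

open MeasureTheory ProbabilityTheory Real
open scoped ENNReal NNReal BoundedContinuousFunction Topology

noncomputable section PerpAux

variable {d : ℕ}

local notation "E" => EuclideanSpace ℝ (Fin d)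

/-- iterate function -/
def perpG (θ : ℝ) (n : ℕ) (w : ℕ → ℝ × E) (x : E) : E :=
  (∑ i ∈ Finset.range n, ((∏ j ∈ Finset.range (i + 1), (w j).1) ^ (1 / θ)) • (w i).2)
    + ((∏ j ∈ Finset.range n, (w j).1) ^ (1 / θ)) • x

lemma perpG_zero (θ : ℝ) (w : ℕ → ℝ × E) (x : E) : perpG θ 0 w x = x := by
  simp [perpG]

lemma perpG_congr (θ : ℝ) (n : ℕ) {w w' : ℕ → ℝ × E} (h : ∀ j < n, w j = w' j) (x : E) :
    perpG θ n w x = perpG θ n w' x := by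
  unfold perpG
  congr 1
  · refine Finset.sum_congr rfl fun i hi => ?_
    rw [Finset.mem_range] at hi
    rw [Finset.prod_congr rfl fun j hj => ?_, h i hi]
    rw [Finset.mem_range] at hj
    rw [h j (by omega)]
  · rw [Finset.prod_congr rfl fun j hj => ?_]
    rw [Finset.mem_range] at hj
    rw [h j hj]

lemma perpG_succ (θ : ℝ) (n : ℕ) (w : ℕ → ℝ × E) (x : E)
    (hw : ∀ j, 0 < (w j).1) :
    perpG θ (n + 1) w x = perpG θ n w (((w n).1 ^ (1 / θ)) • (x + (w n).2)) := by
  unfold perpG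
  rw [Finset.sum_range_succ, Finset.prod_range_succ,
    Real.mul_rpow (Finset.prod_nonneg fun j _ => (hw j).le) (hw n).le]
  rw [smul_smul, smul_add]
  abel

end PerpAux

section Meas
variable {d : ℕ}
local notation "E" => EuclideanSpace ℝ (Fin d)

/-- extension of a finitely indexed vector -/
def perpExt (n : ℕ) (v : {j : ℕ // j ∈ Finset.range n} → ℝ × E) (j : ℕ) : ℝ × E :=
  if h : j ∈ Finset.range n then v ⟨j, h⟩ else 0

/-- the finite-input version of `perpG` -/
noncomputable def perpH (θ : ℝ) (n : ℕ) (p : ({j : ℕ // j ∈ Finset.range n} → ℝ × E) × E) : E :=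
  perpG θ n (perpExt n p.1) p.2

lemma perpH_eq (θ : ℝ) (n : ℕ) (w : ℕ → ℝ × E) (x : E) :
    perpG θ n w x = perpH θ n (fun j => w j, x) := by
  refine perpG_congr θ n (fun j hj => ?_) x
  simp [perpExt, Finset.mem_range.2 hj]

lemma measurable_perpH (θ : ℝ) (hθ : 0 < θ) (n : ℕ) : Measurable (perpH (d := d) θ n) := by
  have hext : ∀ j, Measurable fun p : (({j : ℕ // j ∈ Finset.range n} → ℝ × E) × E) =>
      perpExt n p.1 j := by
    intro j
    unfold perpExt
    split_ifs with h
    · exact (measurable_pi_apply _).comp measurable_fst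
    · exact measurable_const
  have hrpow : Measurable fun x : ℝ => x ^ (1 / θ) :=
    (Real.continuous_rpow_const (by positivity)).measurable
  unfold perpH perpG
  apply Measurable.add
  · apply Finset.measurable_sum
    intro i _
    exact ((hrpow.comp (Finset.measurable_prod _ fun j _ => (hext j).fst)).smul
      ((hext i).snd))
  · exact ((hrpow.comp (Finset.measurable_prod _ fun j _ => (hext j).fst)).smul
      measurable_snd)

end Meas

section ProdIndep
set_option linter.unusedSectionVars false
variable {Ω' Ω α β : Type*} [MeasurableSpace Ω'] [MeasurableSpace Ω]
  [MeasurableSpace α] [MeasurableSpace β]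
  (P' : Measure Ω') (P : Measure Ω) [IsProbabilityMeasure P'] [IsProbabilityMeasure P]

lemma map_comp_fst {F : Ω' → α} (hF : Measurable F) :
    (P'.prod P).map (fun q => F q.1) = P'.map F := by
  have : (fun q : Ω' × Ω => F q.1) = F ∘ Prod.fst := rfl
  rw [this, ← Measure.map_map hF measurable_fst, Measure.map_fst_prod, measure_univ, one_smul]

lemma map_comp_snd {G : Ω → α} (hG : Measurable G) :
    (P'.prod P).map (fun q => G q.2) = P.map G := by
  have : (fun q : Ω' × Ω => G q.2) = G ∘ Prod.snd := rfl
  rw [this, ← Measure.map_map hG measurable_snd, Measure.map_snd_prod, measure_univ, one_smul]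

lemma map_prodMap {F : Ω' → α} {G : Ω → β} (hF : Measurable F) (hG : Measurable G) :
    (P'.prod P).map (fun q => (F q.1, G q.2)) = (P'.map F).prod (P.map G) := by
  have h : (fun q : Ω' × Ω => (F q.1, G q.2)) = Prod.map F G := by
    funext q; rfl
  rw [h, ← Measure.map_prod_map _ _ hF hG]

lemma indepFun_comp_fst_snd {F : Ω' → α} {G : Ω → β} (hF : Measurable F) (hG : Measurable G) :
    IndepFun (fun q : Ω' × Ω => F q.1) (fun q => G q.2) (P'.prod P) := by
  refine (indepFun_iff_map_prod_eq_prod_map_map ?_ ?_).mpr ?_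
  · exact (hF.comp measurable_fst).aemeasurable
  · exact (hG.comp measurable_snd).aemeasurable
  rw [map_prodMap P' P hF hG, map_comp_fst P' P hF, map_comp_snd P' P hG]

lemma indepFun_fst_pair {A : Ω' → α} {B : Ω' → β} (hA : Measurable A) (hB : Measurable B)
    (hAB : IndepFun A B P') :
    IndepFun (fun q : Ω' × Ω => A q.1) (fun q => (B q.1, q.2)) (P'.prod P) := by
  have hABmap : P'.map (fun ω' => (A ω', B ω')) = (P'.map A).prod (P'.map B) :=
    (indepFun_iff_map_prod_eq_prod_map_map hA.aemeasurable hB.aemeasurable).mp hAB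
  have hAP : IsProbabilityMeasure (P'.map A) := Measure.isProbabilityMeasure_map hA.aemeasurable
  have hBP : IsProbabilityMeasure (P'.map B) := Measure.isProbabilityMeasure_map hB.aemeasurable
  refine (indepFun_iff_map_prod_eq_prod_map_map ?_ ?_).mpr ?_
  · exact (hA.comp measurable_fst).aemeasurable
  · exact ((hB.comp measurable_fst).prodMk measurable_snd).aemeasurable
  have h1 : (fun q : Ω' × Ω => (A q.1, (B q.1, q.2)))
      = MeasurableEquiv.prodAssoc ∘ (Prod.map (fun ω' => (A ω', B ω')) (id : Ω → Ω)) := by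
    funext q; rfl
  have h2 : (fun q : Ω' × Ω => (B q.1, q.2)) = Prod.map B (id : Ω → Ω) := by
    funext q; rfl
  rw [h1, ← Measure.map_map MeasurableEquiv.prodAssoc.measurable
      ((hA.prodMk hB).prodMap measurable_id),
    ← Measure.map_prod_map _ _ (hA.prodMk hB) measurable_id,
    hABmap, Measure.map_id,
    (measurePreserving_prodAssoc (P'.map A) (P'.map B) P).map_eq,
    map_comp_fst P' P hA, h2, ← Measure.map_prod_map _ _ hB measurable_id, Measure.map_id]

end ProdIndep

section ProdZero
variable {d : ℕ}
local notation "E" => EuclideanSpace ℝ (Fin d)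

lemma perp_prod_tendsto_zero
    (ν₁ : Measure E) [IsProbabilityMeasure ν₁]
    {Ω' : Type*} [MeasurableSpace Ω'] (P' : Measure Ω') [IsProbabilityMeasure P']
    (W : ℕ → Ω' → ℝ × E) (hWmeas : ∀ i, Measurable (W i))
    (hWindep : iIndepFun W P')
    (hWlaw : ∀ i, Measure.map (W i) P' = (volume.restrict (Set.Ioo (0 : ℝ) 1)).prod ν₁) :
    ∀ᵐ ω' ∂P', Filter.Tendsto (fun n => ∏ j ∈ Finset.range n, (W j ω').1)
      Filter.atTop (nhds 0) := by
  set V : ℕ → Ω' → ℝ := fun j ω' => (W j ω').1 with hV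
  have hVmeas : ∀ j, Measurable (V j) := fun j => (hWmeas j).fst
  have hVlaw : ∀ j, P'.map (V j) = volume.restrict (Set.Ioo (0 : ℝ) 1) := by
    intro j
    have : V j = Prod.fst ∘ W j := rfl
    rw [this, ← Measure.map_map measurable_fst (hWmeas j), hWlaw j, Measure.map_fst_prod,
      measure_univ, one_smul]
  have hVIoo : ∀ j, ∀ᵐ ω' ∂P', V j ω' ∈ Set.Ioo (0 : ℝ) 1 := by
    intro j
    have h1 : ∀ᵐ x ∂(P'.map (V j)), x ∈ Set.Ioo (0 : ℝ) 1 := by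
      rw [hVlaw j]
      exact ae_restrict_mem measurableSet_Ioo
    exact (ae_map_iff (hVmeas j).aemeasurable measurableSet_Ioo).mp h1
  have hgood : ∀ᵐ ω' ∂P', ∀ j, V j ω' ∈ Set.Ioo (0 : ℝ) 1 := ae_all_iff.mpr hVIoo
  set M : ℕ → Ω' → ℝ := fun n ω' => ∏ j ∈ Finset.range n, V j ω' with hM
  have hMmeas : ∀ n, Measurable (M n) :=
    fun n => Finset.measurable_prod _ fun j _ => hVmeas j
  have hMbd : ∀ n, ∀ᵐ ω' ∂P', M n ω' ∈ Set.Icc (0 : ℝ) 1 := by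
    intro n
    filter_upwards [hgood] with ω' hg
    constructor
    · exact Finset.prod_nonneg fun j _ => (hg j).1.le
    · exact Finset.prod_le_one (fun j _ => (hg j).1.le) (fun j _ => (hg j).2.le)
  have hMint : ∀ n, Integrable (M n) P' := by
    intro n
    refine Integrable.mono' (integrable_const 1) (hMmeas n).aestronglyMeasurable ?_
    filter_upwards [hMbd n] with ω' h
    rw [Real.norm_eq_abs, abs_of_nonneg h.1]
    exact h.2
  have hVbd : ∀ n, ∀ᵐ ω' ∂P', V n ω' ∈ Set.Icc (0 : ℝ) 1 := by
    intro n
    filter_upwards [hVIoo n] with ω' h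
    exact ⟨h.1.le, h.2.le⟩
  have hVint : ∀ n, Integrable (V n) P' := by
    intro n
    refine Integrable.mono' (integrable_const 1) (hVmeas n).aestronglyMeasurable ?_
    filter_upwards [hVbd n] with ω' h
    rw [Real.norm_eq_abs, abs_of_nonneg h.1]
    exact h.2
  have hVval : ∀ n, ∫ ω', V n ω' ∂P' = 1 / 2 := by
    intro n
    have h1 : ∫ ω', V n ω' ∂P' = ∫ x, x ∂(P'.map (V n)) :=
      (integral_map (hVmeas n).aemeasurable aestronglyMeasurable_id).symm
    rw [h1, hVlaw n]
    have h2 : ∫ x in Set.Ioo (0 : ℝ) 1, x = ∫ x in Set.Ioc (0 : ℝ) 1, x :=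
      (integral_Ioc_eq_integral_Ioo).symm
    have h3 : ∫ x in Set.Ioc (0 : ℝ) 1, x = ∫ x in (0 : ℝ)..1, x :=
      (intervalIntegral.integral_of_le zero_le_one).symm
    rw [h2, h3, integral_id]
    norm_num
  have hindep : ∀ n, IndepFun (M n) (V n) P' := by
    intro n
    have base := hWindep.indepFun_finset (Finset.range n) {n}
      (by simp) hWmeas
    have hg1 : Measurable fun v : ({j : ℕ // j ∈ Finset.range n} → ℝ × E) =>
        ∏ i ∈ (Finset.range n).attach, (v i).1 :=
      Finset.measurable_prod _ fun i _ => (measurable_pi_apply i).fst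
    have hg2 : Measurable fun v : ({j : ℕ // j ∈ ({n} : Finset ℕ)} → ℝ × E) =>
        (v ⟨n, Finset.mem_singleton_self n⟩).1 := (measurable_pi_apply _).fst
    have hcomp := base.comp hg1 hg2
    have e1 : (fun v : ({j : ℕ // j ∈ Finset.range n} → ℝ × E) =>
        ∏ i ∈ (Finset.range n).attach, (v i).1) ∘ (fun a (i : (Finset.range n : Finset ℕ)) => W i a)
        = M n := by
      funext ω'
      simp only [Function.comp_apply, hM]
      exact Finset.prod_attach (Finset.range n) (fun j => (W j ω').1)
    have e2 : (fun v : ({j : ℕ // j ∈ ({n} : Finset ℕ)} → ℝ × E) =>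
        (v ⟨n, Finset.mem_singleton_self n⟩).1) ∘ (fun a (i : (({n} : Finset ℕ) : Finset ℕ)) => W i a)
        = V n := rfl
    rwa [e1, e2] at hcomp
  have hMval : ∀ n, ∫ ω', M n ω' ∂P' = (1 / 2 : ℝ) ^ n := by
    intro n
    induction n with
    | zero => simp [hM]
    | succ n ih =>
      have hsucc : M (n + 1) = fun ω' => M n ω' * V n ω' := by
        funext ω'; exact Finset.prod_range_succ _ _
      have hmul := IndepFun.integral_mul_eq_mul_integral (hindep n) (hMint n).1 (hVint n).1
      rw [hsucc]
      have : ∫ ω', (fun ω' => M n ω' * V n ω') ω' ∂P' = ∫ ω', (M n * V n) ω' ∂P' := rfl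
      rw [this, hmul, ih, hVval n, pow_succ]
  -- the infimum
  set L : Ω' → ℝ := fun ω' => ⨅ n, M n ω' with hL
  have hLmeas : Measurable L := Measurable.iInf hMmeas
  have hbdd : ∀ᵐ ω' ∂P', BddBelow (Set.range fun n => M n ω') := by
    filter_upwards [hgood] with ω' hg
    exact ⟨0, fun x ⟨n, hn⟩ => hn ▸ Finset.prod_nonneg fun j _ => (hg j).1.le⟩
  have hanti : ∀ᵐ ω' ∂P', Antitone fun n => M n ω' := by
    filter_upwards [hgood] with ω' hg
    refine antitone_nat_of_succ_le fun n => ?_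
    have : M (n + 1) ω' = M n ω' * V n ω' := Finset.prod_range_succ _ _
    rw [this]
    exact mul_le_of_le_one_right (Finset.prod_nonneg fun j _ => (hg j).1.le) (hg n).2.le
  have hLle : ∀ n, ∀ᵐ ω' ∂P', L ω' ≤ M n ω' := by
    intro n
    filter_upwards [hbdd] with ω' hb
    exact ciInf_le hb n
  have hLnn : ∀ᵐ ω' ∂P', 0 ≤ L ω' := by
    filter_upwards [hgood] with ω' hg
    exact le_ciInf fun n => Finset.prod_nonneg fun j _ => (hg j).1.le
  have hLint : Integrable L P' := by
    refine Integrable.mono' (integrable_const 1) hLmeas.aestronglyMeasurable ?_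
    filter_upwards [hLnn, hLle 0] with ω' h0 h1
    rw [Real.norm_eq_abs, abs_of_nonneg h0]
    simpa [hM] using h1
  have hLzero : ∫ ω', L ω' ∂P' = 0 := by
    have hub : ∀ n, ∫ ω', L ω' ∂P' ≤ (1 / 2 : ℝ) ^ n := by
      intro n
      rw [← hMval n]
      exact integral_mono_ae hLint (hMint n) (hLle n)
    have hnn : 0 ≤ ∫ ω', L ω' ∂P' := integral_nonneg_of_ae hLnn
    have hle : ∫ ω', L ω' ∂P' ≤ 0 := by
      refine le_of_tendsto_of_tendsto tendsto_const_nhds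
        (tendsto_pow_atTop_nhds_zero_of_lt_one (r := (1/2 : ℝ)) (by norm_num) (by norm_num)) ?_
      exact Filter.Eventually.of_forall hub
    linarith
  have hLzeroae : ∀ᵐ ω' ∂P', L ω' = 0 := by
    have := (integral_eq_zero_iff_of_nonneg_ae hLnn hLint).mp hLzero
    filter_upwards [this] with ω' h
    exact h
  filter_upwards [hanti, hbdd, hLzeroae] with ω' h1 h2 h3
  have h5 := tendsto_atTop_ciInf h1 h2
  rw [show (⨅ i, M i ω') = 0 from h3] at h5
  exact h5

end ProdZero

lemma ae_comp_fst {Ω' Ω : Type*} [MeasurableSpace Ω'] [MeasurableSpace Ω]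
    (P' : Measure Ω') (P : Measure Ω) [IsProbabilityMeasure P] [IsProbabilityMeasure P']
    {p : Ω' → Prop} (h : ∀ᵐ ω' ∂P', p ω') : ∀ᵐ q ∂(P'.prod P), p q.1 := by
  rw [ae_iff] at h ⊢
  obtain ⟨N, hsub, hmN, h0⟩ := exists_measurable_superset_of_null h
  refine measure_mono_null (t := N ×ˢ (Set.univ : Set Ω)) (fun q hq => ?_) ?_
  · exact Set.mem_prod.mpr ⟨hsub hq, Set.mem_univ q.2⟩
  · rw [Measure.prod_prod, h0, zero_mul]

theorem stmt11 {d : ℕ} (θ : ℝ) (hθ : 0 < θ)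
    (ν₁ : Measure (EuclideanSpace ℝ (Fin d))) [IsProbabilityMeasure ν₁]
    {Ω : Type*} [MeasurableSpace Ω] (P : Measure Ω) [IsProbabilityMeasure P]
    (X : Ω → EuclideanSpace ℝ (Fin d)) (U : Ω → ℝ) (Z : Ω → EuclideanSpace ℝ (Fin d))
    (hXmeas : Measurable X) (hUmeas : Measurable U) (hZmeas : Measurable Z)
    (hUlaw : Measure.map U P = volume.restrict (Set.Ioo (0 : ℝ) 1))
    (hZlaw : Measure.map Z P = ν₁)
    (hXZ : IndepFun X Z P) (hU_XZ : IndepFun U (fun ω => (X ω, Z ω)) P)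
    (hfix : Measure.map X P =
      Measure.map (fun ω => (U ω ^ (1 / θ)) • (X ω + Z ω)) P)
    {Ω' : Type*} [MeasurableSpace Ω'] (P' : Measure Ω') [IsProbabilityMeasure P']
    (W : ℕ → Ω' → ℝ × EuclideanSpace ℝ (Fin d)) (hWmeas : ∀ i, Measurable (W i))
    (hWindep : iIndepFun W P')
    (hWlaw : ∀ i, Measure.map (W i) P' = (volume.restrict (Set.Ioo (0 : ℝ) 1)).prod ν₁)
    (hconv : ∀ᵐ ω ∂P', Summable (fun i : ℕ =>
      ((∏ j ∈ Finset.range (i + 1), (W j ω).1) ^ (1 / θ)) • (W i ω).2)) :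
    Measure.map X P =
      Measure.map (fun ω => ∑' i : ℕ,
        ((∏ j ∈ Finset.range (i + 1), (W j ω).1) ^ (1 / θ)) • (W i ω).2) P' := by
  classical
  set u : Measure ℝ := volume.restrict (Set.Ioo (0 : ℝ) 1) with hu
  haveI hup : IsProbabilityMeasure u := by
    constructor
    rw [hu, Measure.restrict_apply_univ, Real.volume_Ioo]
    norm_num
  set m := u.prod ν₁ with hm
  set μ := P.map X with hμ
  haveI hμp : IsProbabilityMeasure μ := Measure.isProbabilityMeasure_map hXmeas.aemeasurable
  set Q := P'.prod P with hQ
  set φ : (ℝ × EuclideanSpace ℝ (Fin d)) × EuclideanSpace ℝ (Fin d) → EuclideanSpace ℝ (Fin d) := fun p => (p.1.1 ^ (1 / θ)) • (p.2 + p.1.2) with hφ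
  have hrpowm : Measurable fun x : ℝ => x ^ (1 / θ) :=
    (Real.continuous_rpow_const (by positivity)).measurable
  have hφmeas : Measurable φ :=
    (hrpowm.comp measurable_fst.fst).smul (measurable_snd.add measurable_fst.snd)
  -- the law of the triple
  have hTlaw : P.map (fun ω => (U ω, (X ω, Z ω))) = u.prod (μ.prod ν₁) := by
    have h1 := (indepFun_iff_map_prod_eq_prod_map_map hUmeas.aemeasurable
      ((hXmeas.prodMk hZmeas).aemeasurable)).mp hU_XZ
    have h2 := (indepFun_iff_map_prod_eq_prod_map_map hXmeas.aemeasurable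
      hZmeas.aemeasurable).mp hXZ
    rw [h1, h2, hUlaw, hZlaw, hμ]
  have hξmeas : Measurable (fun r : ℝ × (EuclideanSpace ℝ (Fin d) × EuclideanSpace ℝ (Fin d)) => ((r.1, r.2.2), r.2.1)) :=
    (measurable_fst.prodMk measurable_snd.snd).prodMk measurable_snd.fst
  have hξ : Measure.map (fun r : ℝ × (EuclideanSpace ℝ (Fin d) × EuclideanSpace ℝ (Fin d)) => ((r.1, r.2.2), r.2.1)) (u.prod (μ.prod ν₁))
      = m.prod μ := by
    have e : (fun r : ℝ × (EuclideanSpace ℝ (Fin d) × EuclideanSpace ℝ (Fin d)) => ((r.1, r.2.2), r.2.1))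
        = (MeasurableEquiv.prodAssoc.symm : ℝ × (EuclideanSpace ℝ (Fin d) × EuclideanSpace ℝ (Fin d)) → (ℝ × EuclideanSpace ℝ (Fin d)) × EuclideanSpace ℝ (Fin d))
          ∘ (Prod.map (id : ℝ → ℝ) (Prod.swap : EuclideanSpace ℝ (Fin d) × EuclideanSpace ℝ (Fin d) → EuclideanSpace ℝ (Fin d) × EuclideanSpace ℝ (Fin d))) := by
      funext r; rfl
    rw [e, ← Measure.map_map MeasurableEquiv.prodAssoc.symm.measurable
        (measurable_id.prodMap measurable_swap),
      ← Measure.map_prod_map _ _ measurable_id measurable_swap, Measure.map_id,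
      Measure.measurePreserving_swap.map_eq,
      ((measurePreserving_prodAssoc u ν₁ μ).symm MeasurableEquiv.prodAssoc).map_eq, hm]
  have hφlaw : (m.prod μ).map φ = μ := by
    rw [← hξ, Measure.map_map hφmeas hξmeas, ← hTlaw,
      Measure.map_map (hφmeas.comp hξmeas) (hUmeas.prodMk (hXmeas.prodMk hZmeas))]
    have e2 : (φ ∘ (fun r : ℝ × (EuclideanSpace ℝ (Fin d) × EuclideanSpace ℝ (Fin d)) => ((r.1, r.2.2), r.2.1)))
        ∘ (fun ω => (U ω, (X ω, Z ω))) = fun ω => (U ω ^ (1 / θ)) • (X ω + Z ω) := rfl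
    rw [e2, hμ, ← hfix]
  -- the iterates
  set R : ℕ → Ω' × Ω → EuclideanSpace ℝ (Fin d) :=
    fun n q => perpG θ n (fun j => W j q.1) (X q.2) with hR
  have hVnmeas : ∀ n : ℕ, Measurable (fun ω' (i : (Finset.range n : Finset ℕ)) => W i ω') :=
    fun n => measurable_pi_lambda _ fun i => hWmeas i
  have hRcomp : ∀ n, R n = (perpH θ n) ∘
      (fun q : Ω' × Ω => ((fun i : (Finset.range n : Finset ℕ) => W i q.1), X q.2)) := by
    intro n; funext q; exact perpH_eq θ n _ _
  have hpairmeas : ∀ n, Measurable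
      (fun q : Ω' × Ω => ((fun i : (Finset.range n : Finset ℕ) => W i q.1), X q.2)) :=
    fun n => ((hVnmeas n).comp measurable_fst).prodMk (hXmeas.comp measurable_snd)
  have hRmeas : ∀ n, Measurable (R n) := fun n => by
    rw [hRcomp n]
    exact (measurable_perpH θ hθ n).comp (hpairmeas n)
  -- a.e. positivity of the uniform coordinates
  have hWIoo : ∀ᵐ ω' ∂P', ∀ j, (W j ω').1 ∈ Set.Ioo (0 : ℝ) 1 := by
    refine ae_all_iff.mpr fun j => ?_
    have h1 : ∀ᵐ x ∂(P'.map (fun ω' => (W j ω').1)), x ∈ Set.Ioo (0 : ℝ) 1 := by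
      have : (fun ω' => (W j ω').1) = Prod.fst ∘ W j := rfl
      rw [this, ← Measure.map_map measurable_fst (hWmeas j), hWlaw j, hm,
        Measure.map_fst_prod, measure_univ, one_smul]
      exact ae_restrict_mem measurableSet_Ioo
    exact (ae_map_iff (hWmeas j).fst.aemeasurable measurableSet_Ioo).mp h1
  -- the law recursion
  have hlawR : ∀ n, Q.map (R n) = μ := by
    intro n
    induction n with
    | zero =>
      have h0 : R 0 = fun q : Ω' × Ω => X q.2 := by
        funext q; exact perpG_zero θ _ _
      rw [h0, hQ, map_comp_snd P' P hXmeas, hμ]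
    | succ n ih =>
      have hae : R (n + 1) =ᵐ[Q]
          fun q => perpG θ n (fun j => W j q.1) (φ ((W n q.1), X q.2)) := by
        have hg : ∀ᵐ q ∂Q, ∀ j, (W j q.1).1 ∈ Set.Ioo (0 : ℝ) 1 := ae_comp_fst P' P hWIoo
        filter_upwards [hg] with q hq
        exact perpG_succ θ n (fun j => W j q.1) (X q.2) (fun j => (hq j).1)
      have hYmeas : Measurable (fun q : Ω' × Ω => φ ((W n q.1), X q.2)) :=
        hφmeas.comp (((hWmeas n).comp measurable_fst).prodMk (hXmeas.comp measurable_snd))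
      have hYlaw : Q.map (fun q : Ω' × Ω => φ ((W n q.1), X q.2)) = μ := by
        have hcomp : (fun q : Ω' × Ω => φ ((W n q.1), X q.2))
            = φ ∘ (fun q : Ω' × Ω => (W n q.1, X q.2)) := rfl
        have hpairWX : Measurable (fun q : Ω' × Ω => (W n q.1, X q.2)) :=
          ((hWmeas n).comp measurable_fst).prodMk (hXmeas.comp measurable_snd)
        rw [hcomp, ← Measure.map_map hφmeas hpairWX,
          hQ, map_prodMap P' P (hWmeas n) hXmeas, hWlaw n, ← hμ, hφlaw]
      -- independence of the prefix from the new coordinate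
      have hWn_indep : IndepFun (fun ω' (i : (Finset.range n : Finset ℕ)) => W i ω') (W n) P' := by
        have base := hWindep.indepFun_finset (Finset.range n) {n} (by simp) hWmeas
        have hg2 : Measurable fun v : ({j : ℕ // j ∈ ({n} : Finset ℕ)} →
            ℝ × EuclideanSpace ℝ (Fin d)) => v ⟨n, Finset.mem_singleton_self n⟩ :=
          measurable_pi_apply _
        have hcomp := base.comp measurable_id hg2
        exact hcomp
      have hind1 : IndepFun (fun q : Ω' × Ω => (fun i : (Finset.range n : Finset ℕ) => W i q.1))
          (fun q : Ω' × Ω => φ ((W n q.1), X q.2)) Q := by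
        have h1 := indepFun_fst_pair P' P (hVnmeas n) (hWmeas n) hWn_indep
        have hφ2 : Measurable (fun p : (ℝ × EuclideanSpace ℝ (Fin d)) × Ω => φ (p.1, X p.2)) :=
          hφmeas.comp (measurable_fst.prodMk (hXmeas.comp measurable_snd))
        have h2 := h1.comp
          (measurable_id (α := ({j : ℕ // j ∈ Finset.range n} → ℝ × EuclideanSpace ℝ (Fin d)))) hφ2
        exact h2
      have hind2 : IndepFun (fun q : Ω' × Ω => (fun i : (Finset.range n : Finset ℕ) => W i q.1))
          (fun q : Ω' × Ω => X q.2) Q :=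
        indepFun_comp_fst_snd P' P (hVnmeas n) hXmeas
      have hXsndmeas : Measurable (fun q : Ω' × Ω => X q.2) := hXmeas.comp measurable_snd
      have hVnQmeas : Measurable (fun q : Ω' × Ω =>
          (fun i : (Finset.range n : Finset ℕ) => W i q.1)) := (hVnmeas n).comp measurable_fst
      have hXsndlaw : Q.map (fun q : Ω' × Ω => X q.2) = μ := by
        rw [hQ, map_comp_snd P' P hXmeas, hμ]
      have hkey : Q.map (fun q : Ω' × Ω =>
            ((fun i : (Finset.range n : Finset ℕ) => W i q.1), φ ((W n q.1), X q.2)))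
          = Q.map (fun q : Ω' × Ω =>
            ((fun i : (Finset.range n : Finset ℕ) => W i q.1), X q.2)) := by
        rw [(indepFun_iff_map_prod_eq_prod_map_map hVnQmeas.aemeasurable
            hYmeas.aemeasurable).mp hind1,
          (indepFun_iff_map_prod_eq_prod_map_map hVnQmeas.aemeasurable
            hXsndmeas.aemeasurable).mp hind2,
          hYlaw, hXsndlaw]
      have hfun : (fun q : Ω' × Ω => perpG θ n (fun j => W j q.1) (φ ((W n q.1), X q.2)))
          = (perpH θ n) ∘ (fun q : Ω' × Ω =>
            ((fun i : (Finset.range n : Finset ℕ) => W i q.1), φ ((W n q.1), X q.2))) := by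
        funext q; exact perpH_eq θ n _ _
      have hpairmeas2 : Measurable (fun q : Ω' × Ω =>
          ((fun i : (Finset.range n : Finset ℕ) => W i q.1), φ ((W n q.1), X q.2))) :=
        hVnQmeas.prodMk hYmeas
      rw [Measure.map_congr hae, hfun,
        ← Measure.map_map (measurable_perpH θ hθ n) hpairmeas2, hkey,
        Measure.map_map (measurable_perpH θ hθ n) (hpairmeas n), ← hRcomp n, ih]
  -- the limit
  set S : Ω' → EuclideanSpace ℝ (Fin d) := fun ω => ∑' i : ℕ,
    ((∏ j ∈ Finset.range (i + 1), (W j ω).1) ^ (1 / θ)) • (W i ω).2 with hS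
  set A : ℕ → Ω' → EuclideanSpace ℝ (Fin d) := fun n ω => ∑ i ∈ Finset.range n,
    ((∏ j ∈ Finset.range (i + 1), (W j ω).1) ^ (1 / θ)) • (W i ω).2 with hA
  have hAmeas : ∀ n, Measurable (A n) := by
    intro n
    refine Finset.measurable_sum _ fun i _ => ?_
    exact ((hrpowm.comp (Finset.measurable_prod _ fun j _ => (hWmeas j).fst)).smul
      (hWmeas i).snd)
  have hAtendsto : ∀ᵐ ω' ∂P', Filter.Tendsto (fun n => A n ω') Filter.atTop (nhds (S ω')) := by
    filter_upwards [hconv] with ω' h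
    exact h.hasSum.tendsto_sum_nat
  have hSmeas : AEMeasurable S P' :=
    aemeasurable_of_tendsto_metrizable_ae _ (fun n => (hAmeas n).aemeasurable) hAtendsto
  have hMten : ∀ᵐ ω' ∂P', Filter.Tendsto (fun n => ∏ j ∈ Finset.range n, (W j ω').1)
      Filter.atTop (nhds 0) := perp_prod_tendsto_zero ν₁ P' W hWmeas hWindep hWlaw
  have hRten : ∀ᵐ q ∂Q, Filter.Tendsto (fun n => R n q) Filter.atTop (nhds (S q.1)) := by
    filter_upwards [ae_comp_fst P' P hAtendsto, ae_comp_fst P' P hMten] with q h1 h2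
    have hcont : Continuous (fun x : ℝ => x ^ (1 / θ)) :=
      Real.continuous_rpow_const (by positivity)
    have h3 : Filter.Tendsto (fun n => ((∏ j ∈ Finset.range n, (W j q.1).1) ^ (1 / θ)))
        Filter.atTop (nhds ((0 : ℝ) ^ (1 / θ))) := (hcont.tendsto _).comp h2
    rw [Real.zero_rpow (by positivity)] at h3
    have hB : Filter.Tendsto (fun n =>
        ((∏ j ∈ Finset.range n, (W j q.1).1) ^ (1 / θ)) • X q.2) Filter.atTop
        (nhds (0 : EuclideanSpace ℝ (Fin d))) := by
      have := h3.smul_const (X q.2)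
      rwa [zero_smul] at this
    have h4 := h1.add hB
    rw [add_zero] at h4
    exact h4
  -- conclusion via bounded continuous test functions
  haveI : IsProbabilityMeasure (Measure.map X P) := hμp
  refine ext_of_forall_lintegral_eq_of_IsFiniteMeasure fun f => ?_
  have hfmeas : Measurable fun x : EuclideanSpace ℝ (Fin d) => (f x : ℝ≥0∞) :=
    measurable_coe_nnreal_ennreal.comp f.continuous.measurable
  have hl : ∀ n, ∫⁻ x, f x ∂(Measure.map X P) = ∫⁻ q, f (R n q) ∂Q := by
    intro n
    rw [← hμ, ← hlawR n, lintegral_map hfmeas (hRmeas n)]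
  have hlim : Filter.Tendsto (fun n => ∫⁻ q, f (R n q) ∂Q) Filter.atTop
      (nhds (∫⁻ q, f (S q.1) ∂Q)) := by
    refine tendsto_lintegral_of_dominated_convergence (fun _ => ((nndist 0 f : ℝ≥0) : ℝ≥0∞))
      (fun n => hfmeas.comp (hRmeas n)) (fun n => Filter.Eventually.of_forall fun q => ?_) ?_ ?_
    · exact ENNReal.coe_le_coe.mpr (f.apply_le_nndist_zero (R n q))
    · simp
    · filter_upwards [hRten] with q hq
      exact (ENNReal.tendsto_coe.mpr ((f.continuous.tendsto _).comp hq))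
  have heq1 : ∫⁻ x, f x ∂(Measure.map X P) = ∫⁻ q, f (S q.1) ∂Q := by
    refine tendsto_nhds_unique ?_ hlim
    simp_rw [← hl]
    exact tendsto_const_nhds
  have hmapfst : Q.map Prod.fst = P' := by
    rw [hQ, Measure.map_fst_prod, measure_univ, one_smul]
  have hfS : AEMeasurable (fun ω' => (f (S ω') : ℝ≥0∞)) P' := hfmeas.comp_aemeasurable hSmeas
  have heq2 : ∫⁻ q, f (S q.1) ∂Q = ∫⁻ ω', f (S ω') ∂P' := by
    rw [← hmapfst, lintegral_map' (hmapfst.symm ▸ hfS) measurable_fst.aemeasurable]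
  have heq3 : ∫⁻ ω', f (S ω') ∂P' = ∫⁻ x, f x ∂(P'.map S) :=
    (lintegral_map' hfmeas.aemeasurable hSmeas).symm
  rw [heq1, heq2, heq3, hS]
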